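/- Theorem 4.1 (power boundedness / Von Neumann stability): Fix reals h > 0, Δt with 0 < Δt < h, k, and c^e ≥ 0, c^o ≥ 0. Let E : ℝ → ℝ be E(c) = (exp(c) − 1)/c for c ≠ 0 and E(0) = 1; set d^e = exp(−c^e·Δt/2), d^o = exp(−c^o·Δt/2), f^e = −i·(Δt/h)·E(−c^e·Δt/2)·sin(k·h/2), f^o = −i·(Δt/h)·E(−c^o·Δt/2)·sin(k·h/2), and let G be the 2×2 complex matrix [[(d^e)² + (d^e+1)·f^e·f^o, d^o·(d^e+1)·f^e],[(d^o + (d^e)²)·f^o + (d^e+1)·f^e·(f^o)², (d^o)² + d^o·(d^e+1)·f^e·f^o]]. Then G is power-bounded: there exists a constant C such that ‖Gⁿ‖ ≤ C for all natural numbers n. -/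

import Mathlib

open Matrix

attribute [local instance] Matrix.linftyOpNormedRing
attribute [local instance] Matrix.linftyOpNormedSpace

/-- `E c = (exp c - 1)/c` for `c ≠ 0`, `E 0 = 1`. -/
noncomputable def E : ℝ → ℝ := fun c => if c = 0 then 1 else (Real.exp c - 1) / c

section helpers

lemma CH2 (M : Matrix (Fin 2) (Fin 2) ℂ) :
    M * M = (M 0 0 + M 1 1) • M - (M 0 0 * M 1 1 - M 0 1 * M 1 0) • 1 := by
  ext i j
  fin_cases i <;> fin_cases j <;>
    simp [Matrix.mul_apply, Fin.sum_univ_two, Matrix.one_apply] <;> ring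
lemma geom_aux (r : ℝ) (h0 : 0 ≤ r) (h1 : r ≤ 1) : ∀ n : ℕ, ((n:ℝ)+1) * r^n * (1-r) ≤ 1 := by
  intro n
  induction n with
  | zero => simpa using sub_le_self 1 h0
  | succ n ih =>
    have hrn : r^(n+1) ≤ 1 := pow_le_one₀ h0 h1
    have e : ((n+1:ℕ):ℝ) + 1 = ((n:ℝ)+1) + 1 := by push_cast; ring
    rw [e]
    have : (((n:ℝ)+1)+1) * r^(n+1) * (1-r) = r * (((n:ℝ)+1) * r^n * (1-r)) + r^(n+1) * (1-r) := by
      ring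
    rw [this]
    nlinarith [mul_le_mul_of_nonneg_left ih h0, pow_nonneg h0 (n+1)]

lemma power_bounded_of_quadratic (M : Matrix (Fin 2) (Fin 2) ℂ) (l1 l2 : ℂ)
    (hM : M * M = (l1 + l2) • M - (l1 * l2) • 1)
    (h1 : ‖l1‖ ≤ 1) (h2 : ‖l2‖ ≤ 1)
    (hc : l1 ≠ l2 ∨ (‖l1‖ < 1 ∨ M = l1 • 1)) :
    ∃ C : ℝ, ∀ n : ℕ, ‖M ^ n‖ ≤ C := by
  have hMA : ∀ a b : ℂ, a + b = l1 + l2 → a * b = l1 * l2 → M * (M - a • 1) = b • (M - a • 1) := by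
    intro a b hs hp
    have : M * (M - a • 1) = M * M - a • M := by
      rw [mul_sub, Matrix.mul_smul, mul_one]
    rw [this, hM, ← hs, ← hp]
    module
  by_cases hne : l1 = l2
  case neg =>
    -- distinct eigenvalues
    have key : ∀ n : ℕ, (l1 - l2) • M ^ n = l1 ^ n • (M - l2 • 1) - l2 ^ n • (M - l1 • 1) := by
      intro n
      induction n with
      | zero => simp; module
      | succ n ih =>
        have e1 : M * (M - l2 • 1) = l1 • (M - l2 • 1) := hMA l2 l1 (by ring) (by ring)
        have e2 : M * (M - l1 • 1) = l2 • (M - l1 • 1) := hMA l1 l2 rfl rfl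
        have estep : (l1 - l2) • M ^ (n+1) = M * ((l1 - l2) • M ^ n) := by
          rw [Matrix.mul_smul, ← pow_succ']
        rw [estep, ih, mul_sub, Matrix.mul_smul, Matrix.mul_smul, e1, e2,
          smul_smul, smul_smul, ← pow_succ, ← pow_succ]
    refine ⟨(‖M - l2 • 1‖ + ‖M - l1 • 1‖) / ‖l1 - l2‖, fun n => ?_⟩
    have hd : (0:ℝ) < ‖l1 - l2‖ := by
      simpa using norm_pos_iff.mpr (sub_ne_zero.mpr hne)
    rw [le_div_iff₀ hd]
    have e : ‖M ^ n‖ * ‖l1 - l2‖ = ‖(l1 - l2) • M ^ n‖ := by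
      rw [norm_smul, mul_comm]
    rw [e, key n]
    calc ‖l1 ^ n • (M - l2 • 1) - l2 ^ n • (M - l1 • 1)‖
        ≤ ‖l1 ^ n • (M - l2 • 1)‖ + ‖l2 ^ n • (M - l1 • 1)‖ := norm_sub_le _ _
      _ ≤ ‖M - l2 • 1‖ + ‖M - l1 • 1‖ := by
          rw [norm_smul, norm_smul, norm_pow, norm_pow]
          have g1 := pow_le_one₀ (norm_nonneg l1) h1 (n := n)
          have g2 := pow_le_one₀ (norm_nonneg l2) h2 (n := n)
          have g3 := norm_nonneg (M - l2 • 1)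
          have g4 := norm_nonneg (M - l1 • 1)
          nlinarith [pow_nonneg (norm_nonneg l1) n, pow_nonneg (norm_nonneg l2) n]
  case pos =>
    subst hne
    rcases hc with hne | hlt | heq
    · exact absurd rfl hne
    · -- repeated eigenvalue, ‖l1‖ < 1
      set N : Matrix (Fin 2) (Fin 2) ℂ := M - l1 • 1 with hN
      have hN2 : N * N = 0 := by
        have : N * N = M * M - l1 • M - l1 • M + (l1 * l1) • 1 := by
          rw [hN]
          simp only [sub_mul, mul_sub, Matrix.smul_mul, Matrix.mul_smul, one_mul, mul_one,
            smul_smul]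
          abel
        rw [this, hM]
        module
      have key : ∀ n : ℕ, M ^ (n+1) = l1 ^ (n+1) • 1 + (((n:ℂ)+1) * l1 ^ n) • N := by
        intro n
        induction n with
        | zero => simp [hN]
        | succ n ih =>
          have eM : M = l1 • 1 + N := by rw [hN]; module
          have estep : M ^ (n+2) = M ^ (n+1) * M := by rw [← pow_succ]
          rw [estep, ih, eM, add_mul, mul_add, mul_add, smul_mul_assoc, smul_mul_assoc,
            smul_mul_assoc, smul_mul_assoc, Matrix.mul_smul, Matrix.mul_smul, one_mul,
            mul_one, one_mul, hN2, smul_zero, smul_smul, smul_smul]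
          push_cast
          module
      refine ⟨max ‖(1 : Matrix (Fin 2) (Fin 2) ℂ)‖
        (‖(1 : Matrix (Fin 2) (Fin 2) ℂ)‖ + ‖N‖ / (1 - ‖l1‖)), fun n => ?_⟩
      match n with
      | 0 => simpa using le_max_left _ _
      | (n+1) =>
        refine le_trans ?_ (le_max_right _ _)
        rw [key n]
        have hr0 := norm_nonneg l1
        have hr1 : (0:ℝ) < 1 - ‖l1‖ := by linarith
        calc ‖l1 ^ (n+1) • (1 : Matrix (Fin 2) (Fin 2) ℂ) + (((n:ℂ)+1) * l1 ^ n) • N‖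
            ≤ ‖l1 ^ (n+1) • (1 : Matrix (Fin 2) (Fin 2) ℂ)‖ + ‖(((n:ℂ)+1) * l1 ^ n) • N‖ :=
              norm_add_le _ _
          _ ≤ ‖(1 : Matrix (Fin 2) (Fin 2) ℂ)‖ + ‖N‖ / (1 - ‖l1‖) := by
              rw [norm_smul, norm_smul, norm_pow, norm_mul, norm_pow]
              have g1 : ‖l1‖ ^ (n+1) ≤ 1 := pow_le_one₀ hr0 hlt.le
              have g2 : ‖(n:ℂ)+1‖ = (n:ℝ)+1 := by
                rw [show ((n:ℂ)+1) = ((n+1:ℕ):ℂ) by push_cast; ring]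
                rw [Complex.norm_natCast]; push_cast; ring
              have g3 := geom_aux ‖l1‖ hr0 hlt.le n
              have g4 : ((n:ℝ)+1) * ‖l1‖ ^ n ≤ 1 / (1 - ‖l1‖) := by
                rw [le_div_iff₀ hr1]; linarith
              have g5 := norm_nonneg N
              have g6 := norm_nonneg (1 : Matrix (Fin 2) (Fin 2) ℂ)
              have g7 : ‖(n:ℂ)+1‖ * ‖l1‖ ^ n * ‖N‖ ≤ ‖N‖ / (1 - ‖l1‖) := by
                rw [g2, div_eq_mul_one_div ‖N‖]
                calc ((n:ℝ)+1) * ‖l1‖ ^ n * ‖N‖ ≤ (1 / (1-‖l1‖)) * ‖N‖ :=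
                      mul_le_mul_of_nonneg_right g4 g5
                  _ = ‖N‖ * (1 / (1-‖l1‖)) := by ring
              nlinarith
    · -- M = l1 • 1
      refine ⟨‖(1 : Matrix (Fin 2) (Fin 2) ℂ)‖, fun n => ?_⟩
      rw [heq, smul_pow, one_pow, norm_smul, norm_pow]
      have h1n := pow_le_one₀ (norm_nonneg l1) h1 (n := n)
      have h0 := norm_nonneg (1 : Matrix (Fin 2) (Fin 2) ℂ)
      nlinarith
lemma tanh_aux (x : ℝ) (hx : 0 ≤ x) :
    1 - Real.exp (-(2*x)) ≤ x * (1 + Real.exp (-(2*x))) := by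
  set f : ℝ → ℝ := fun t => t * (1 + Real.exp (-(2*t))) - (1 - Real.exp (-(2*t))) with hf
  have hderiv : ∀ y : ℝ, HasDerivAt f
      (1 * (1 + Real.exp (-(2*y))) + y * (Real.exp (-(2*y)) * (-2)) - -(Real.exp (-(2*y)) * (-2))) y := by
    intro y
    have h1 : HasDerivAt (fun t : ℝ => -(2*t)) (-2) y := by
      have := ((hasDerivAt_id y).const_mul (2:ℝ)).neg; simp only [mul_one] at this; exact this
    have hexp : HasDerivAt (fun t : ℝ => Real.exp (-(2*t))) (Real.exp (-(2*y)) * (-2)) y :=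
      (Real.hasDerivAt_exp _).comp y h1
    exact ((hasDerivAt_id y).mul (hexp.const_add 1)).sub (hexp.const_sub 1)
  have hmono : MonotoneOn f (Set.Ici (0:ℝ)) := by
    apply monotoneOn_of_deriv_nonneg (convex_Ici 0)
    · exact (Continuous.continuousOn (by fun_prop))
    · intro y hy
      exact (hderiv y).differentiableAt.differentiableWithinAt
    · intro y hy
      rw [(hderiv y).deriv]
      rw [interior_Ici] at hy
      have hy' : (0:ℝ) ≤ y := le_of_lt hy
      have h2 : (1 + 2*y) * Real.exp (-(2*y)) ≤ 1 := by
        have := Real.add_one_le_exp (2*y)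
        have hpos := Real.exp_pos (-(2*y))
        have hmul : Real.exp (2*y) * Real.exp (-(2*y)) = 1 := by
          rw [← Real.exp_add]; simp
        nlinarith
      nlinarith [Real.exp_pos (-(2*y))]
  have h0 : f 0 = 0 := by simp [hf]
  have := hmono (Set.self_mem_Ici) (Set.mem_Ici.mpr hx) hx
  rw [h0] at this
  simpa [hf, sub_nonneg] using this

lemma E_nonneg (x : ℝ) (hx : 0 ≤ x) : 0 ≤ E (-x) := by
  rcases eq_or_lt_of_le hx with h | h
  · simp [E, ← h]
  · rw [E, if_neg (neg_ne_zero.mpr (ne_of_gt h))]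
    have h1 : Real.exp (-x) ≤ 1 := by
      rw [← Real.exp_zero]; exact Real.exp_le_exp.mpr (by linarith)
    rw [div_nonneg_iff]
    right; constructor <;> linarith

lemma E_le_one (x : ℝ) (hx : 0 ≤ x) : E (-x) ≤ 1 := by
  rcases eq_or_lt_of_le hx with h | h
  · simp [E, ← h]
  · rw [E, if_neg (neg_ne_zero.mpr (ne_of_gt h))]
    rw [div_le_one_iff]
    right; right
    have := Real.add_one_le_exp (-x)
    constructor <;> linarith

lemma E_key (x : ℝ) (hx : 0 ≤ x) :
    (1 + Real.exp (-x)) * E (-x) ≤ 1 + Real.exp (-x) ^ 2 := by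
  rcases eq_or_lt_of_le hx with h | h
  · simp [E, ← h]
  · rw [E, if_neg (neg_ne_zero.mpr (ne_of_gt h))]
    have hE : (Real.exp (-x) - 1) / (-x) = (1 - Real.exp (-x)) / x := by
      rw [div_eq_div_iff (by linarith) (by linarith)]; ring
    rw [hE]
    have htanh := tanh_aux x hx
    have hsq : Real.exp (-(2*x)) = Real.exp (-x) ^ 2 := by
      rw [← Real.exp_nat_mul]; ring_nf
    rw [hsq] at htanh
    rw [mul_div_assoc', div_le_iff₀ h]
    nlinarith
end helpers

set_option maxHeartbeats 1000000

/-- Theorem 4.1 (power boundedness / Von Neumann stability): for `0 < Δt < h`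
and decay rates `cᵉ, cᵒ ≥ 0`, the full-step growth-factor matrix `G` of the
staggered-grid Strang-splitting scheme is power-bounded: `‖Gⁿ‖ ≤ C` for all `n`. -/
theorem growth_factor_power_bounded (h Δt k cE cO : ℝ)
    (hh : 0 < h) (hΔt : 0 < Δt) (hΔth : Δt < h) (hcE : 0 ≤ cE) (hcO : 0 ≤ cO)
    (dE dO : ℝ) (fE fO : ℂ)
    (hdE : dE = Real.exp (-(cE * Δt / 2)))
    (hdO : dO = Real.exp (-(cO * Δt / 2)))
    (hfE : fE = -Complex.I * (Δt / h) * E (-(cE * Δt / 2)) * Real.sin (k * h / 2))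
    (hfO : fO = -Complex.I * (Δt / h) * E (-(cO * Δt / 2)) * Real.sin (k * h / 2))
    (G : Matrix (Fin 2) (Fin 2) ℂ)
    (hG : G = !![(dE : ℂ) ^ 2 + ((dE : ℂ) + 1) * fE * fO, (dO : ℂ) * ((dE : ℂ) + 1) * fE;
                 ((dO : ℂ) + (dE : ℂ) ^ 2) * fO + ((dE : ℂ) + 1) * fE * fO ^ 2,
                 (dO : ℂ) ^ 2 + (dO : ℂ) * ((dE : ℂ) + 1) * fE * fO]) :
    ∃ C : ℝ, ∀ n : ℕ, ‖G ^ n‖ ≤ C := by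
  have hx : 0 ≤ cE * Δt / 2 := by positivity
  have hy : 0 ≤ cO * Δt / 2 := by positivity
  set EE := E (-(cE * Δt / 2)) with hEE
  set EO := E (-(cO * Δt / 2)) with hEO
  set s : ℝ := Real.sin (k * h / 2) with hs
  set rE : ℝ := Δt / h * EE * s with hrE
  set rO : ℝ := Δt / h * EO * s with hrO
  set β : ℝ := rE * rO with hβ
  set τ : ℝ := dE^2 + dO^2 - (1+dE)*(1+dO)*β with hτ
  set δ : ℝ := (dE*dO)^2 with hδ
  have ha0 : 0 < dE := hdE ▸ Real.exp_pos _
  have hc0 : 0 < dO := hdO ▸ Real.exp_pos _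
  have ha1 : dE ≤ 1 := by
    rw [hdE, ← Real.exp_zero]; exact Real.exp_le_exp.mpr (by linarith)
  have hc1 : dO ≤ 1 := by
    rw [hdO, ← Real.exp_zero]; exact Real.exp_le_exp.mpr (by linarith)
  have hE0 : 0 ≤ EE := E_nonneg _ hx
  have hF0 : 0 ≤ EO := E_nonneg _ hy
  have hE1 : EE ≤ 1 := E_le_one _ hx
  have hF1 : EO ≤ 1 := E_le_one _ hy
  have hkeyE : (1 + dE) * EE ≤ 1 + dE^2 := by rw [hdE]; exact E_key _ hx
  have hkeyO : (1 + dO) * EO ≤ 1 + dO^2 := by rw [hdO]; exact E_key _ hy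
  have hβeq : β = (Δt/h)^2 * (EE*EO) * s^2 := by rw [hβ, hrE, hrO]; ring
  have hβ0 : 0 ≤ β := by rw [hβeq]; positivity
  have hdth : Δt / h < 1 := (div_lt_one hh).mpr hΔth
  have hdth0 : 0 < Δt / h := by positivity
  have hs1 : s^2 ≤ 1 := by
    nlinarith [Real.sin_le_one (k * h / 2), Real.neg_one_le_sin (k * h / 2)]
  have hs2 : (Δt/h)^2 * s^2 ≤ 1 := by nlinarith
  have hδ0 : 0 < δ := by positivity
  have hac1 : dE*dO ≤ 1 := by nlinarith [mul_pos ha0 hc0, mul_le_mul ha1 hc1 hc0.le zero_le_one]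
  have hδ1 : δ ≤ 1 := by rw [hδ]; nlinarith [mul_pos ha0 hc0]
  have hp1 : τ ≤ 1 + δ := by
    have m1 : 0 ≤ (1-dE^2)*(1-dO^2) := mul_nonneg (by nlinarith) (by nlinarith)
    have m2 : 0 ≤ (1+dE)*(1+dO)*β := by positivity
    have e : 1 + δ - τ = (1-dE^2)*(1-dO^2) + (1+dE)*(1+dO)*β := by rw [hτ, hδ]; ring
    linarith
  have hp2 : -(1+δ) ≤ τ := by
    have e1 : (1+dE)*(1+dO)*β = ((1+dE)*EE) * ((1+dO)*EO) * ((Δt/h)^2 * s^2) := by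
      rw [hβeq]; ring
    have m1 : 0 ≤ (1+dE)*EE := by positivity
    have m2 : 0 ≤ (1+dO)*EO := by positivity
    have m3 : 0 ≤ (Δt/h)^2 * s^2 := by positivity
    have m4 : (1+dE)*(1+dO)*β ≤ (1+dE^2)*(1+dO^2) := by
      rw [e1]
      calc ((1+dE)*EE) * ((1+dO)*EO) * ((Δt/h)^2 * s^2)
          ≤ ((1+dE^2)*(1+dO^2)) * 1 := by
            apply mul_le_mul _ hs2 m3 (by nlinarith)
            exact mul_le_mul hkeyE hkeyO m2 (by nlinarith)
        _ = (1+dE^2)*(1+dO^2) := by ring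
    have e2 : τ + (1+δ) = (1+dE^2)*(1+dO^2) - (1+dE)*(1+dO)*β := by rw [hτ, hδ]; ring
    linarith
  -- complex scalar facts
  have hfE' : fE = -(Complex.I) * (rE : ℝ) := by rw [hfE, hrE]; push_cast; ring
  have hfO' : fO = -(Complex.I) * (rO : ℝ) := by rw [hfO, hrO]; push_cast; ring
  have hff : fE * fO = -((β : ℝ) : ℂ) := by
    rw [hfE', hfO', hβ]
    have : -(Complex.I) * (rE : ℂ) * (-(Complex.I) * (rO : ℂ))
        = (Complex.I * Complex.I) * ((rE : ℂ) * (rO : ℂ)) := by ring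
    rw [this, Complex.I_mul_I]; push_cast; ring
  subst hG
  set M : Matrix (Fin 2) (Fin 2) ℂ :=
    !![(dE : ℂ) ^ 2 + ((dE : ℂ) + 1) * fE * fO, (dO : ℂ) * ((dE : ℂ) + 1) * fE;
       ((dO : ℂ) + (dE : ℂ) ^ 2) * fO + ((dE : ℂ) + 1) * fE * fO ^ 2,
       (dO : ℂ) ^ 2 + (dO : ℂ) * ((dE : ℂ) + 1) * fE * fO] with hM
  have hM00 : M 0 0 = (dE : ℂ) ^ 2 + ((dE : ℂ) + 1) * fE * fO := by rw [hM]; simp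
  have hM01 : M 0 1 = (dO : ℂ) * ((dE : ℂ) + 1) * fE := by rw [hM]; simp
  have hM10 : M 1 0 = ((dO : ℂ) + (dE : ℂ) ^ 2) * fO + ((dE : ℂ) + 1) * fE * fO ^ 2 := by
    rw [hM]; simp
  have hM11 : M 1 1 = (dO : ℂ) ^ 2 + (dO : ℂ) * ((dE : ℂ) + 1) * fE * fO := by rw [hM]; simp
  have htr : M 0 0 + M 1 1 = ((τ : ℝ) : ℂ) := by
    rw [hM00, hM11, hτ]
    have e : (dE : ℂ) ^ 2 + ((dE : ℂ) + 1) * fE * fO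
        + ((dO : ℂ) ^ 2 + (dO : ℂ) * ((dE : ℂ) + 1) * fE * fO)
        = (dE : ℂ) ^ 2 + (dO : ℂ) ^ 2 + (((dE : ℂ) + 1) + (dO : ℂ) * ((dE : ℂ) + 1)) * (fE * fO) := by
      ring
    rw [e, hff]; push_cast; ring
  have hdet : M 0 0 * M 1 1 - M 0 1 * M 1 0 = ((δ : ℝ) : ℂ) := by
    rw [hM00, hM01, hM10, hM11, hδ]; push_cast; ring
  have hCH := CH2 M
  rw [htr, hdet] at hCH
  clear_value EE EO s rE rO β τ δ M
  clear hx hy hfE hfO htr hdet hM00 hM01 hM10 hM11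
  by_cases hdisc : τ^2 < 4*δ
  · -- complex conjugate eigenvalues
    set r : ℝ := Real.sqrt (4*δ - τ^2) with hr
    have hr0 : 0 < r := Real.sqrt_pos.mpr (by linarith)
    have hr2 : r^2 = 4*δ - τ^2 := Real.sq_sqrt (by linarith)
    clear_value r
    set l1 : ℂ := ((τ/2 : ℝ) : ℂ) + ((r/2 : ℝ) : ℂ) * Complex.I with hl1
    set l2 : ℂ := ((τ/2 : ℝ) : ℂ) - ((r/2 : ℝ) : ℂ) * Complex.I with hl2
    have hsum : l1 + l2 = ((τ : ℝ) : ℂ) := by rw [hl1, hl2]; push_cast; ring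
    have hprod : l1 * l2 = ((δ : ℝ) : ℂ) := by
      have e : l1 * l2 = ((τ/2 : ℝ) : ℂ)^2 - ((r/2 : ℝ) : ℂ)^2 * (Complex.I * Complex.I) := by
        rw [hl1, hl2]; ring
      rw [e, Complex.I_mul_I]
      push_cast
      have : ((τ:ℂ)/2)^2 - ((r:ℂ)/2)^2 * (-1) = ((τ^2 + r^2 : ℝ) : ℂ)/4 := by push_cast; ring
      rw [this]
      rw [show τ^2 + r^2 = 4*δ by linarith]
      push_cast; ring
    have habs : ∀ (b : ℝ), ‖((τ/2 : ℝ) : ℂ) + ((b : ℝ) : ℂ) * Complex.I‖ = Real.sqrt ((τ/2)^2 + b^2) := by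
      intro b
      rw [Complex.norm_add_mul_I]
    have hn1 : ‖l1‖ ≤ 1 := by
      rw [hl1, habs]
      rw [show (τ/2)^2 + (r/2)^2 = δ by linarith [hr2]]
      rw [show (1:ℝ) = Real.sqrt 1 by rw [Real.sqrt_one]]
      exact Real.sqrt_le_sqrt (by linarith)
    have hn2 : ‖l2‖ ≤ 1 := by
      have e : l2 = ((τ/2 : ℝ) : ℂ) + ((-(r/2) : ℝ) : ℂ) * Complex.I := by
        rw [hl2]; push_cast; ring
      rw [e, habs]
      rw [show (τ/2)^2 + (-(r/2))^2 = δ by linarith [hr2]]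
      rw [show (1:ℝ) = Real.sqrt 1 by rw [Real.sqrt_one]]
      exact Real.sqrt_le_sqrt (by linarith)
    apply power_bounded_of_quadratic M l1 l2
    · rw [hsum, hprod]; exact hCH
    · exact hn1
    · exact hn2
    · left
      intro heq
      have him := congrArg Complex.im heq
      simp [hl1, hl2] at him
      linarith
  · -- real eigenvalues
    have hd4 : 4*δ ≤ τ^2 := le_of_not_gt hdisc
    set r : ℝ := Real.sqrt (τ^2 - 4*δ) with hr
    have hr0 : 0 ≤ r := Real.sqrt_nonneg _
    have hr2 : r^2 = τ^2 - 4*δ := Real.sq_sqrt (by linarith)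
    have hrle1 : r ≤ 2 - τ := by
      have e : τ^2 - 4*δ ≤ (2-τ)^2 := by linarith
      have h2 := Real.sqrt_le_sqrt e
      rwa [Real.sqrt_sq (by linarith : (0:ℝ) ≤ 2-τ)] at h2
    have hrle2 : r ≤ 2 + τ := by
      have e : τ^2 - 4*δ ≤ (2+τ)^2 := by linarith
      have h2 := Real.sqrt_le_sqrt e
      rwa [Real.sqrt_sq (by linarith : (0:ℝ) ≤ 2+τ)] at h2
    clear_value r
    set l1 : ℂ := (((τ+r)/2 : ℝ) : ℂ) with hl1
    set l2 : ℂ := (((τ-r)/2 : ℝ) : ℂ) with hl2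
    have hsum : l1 + l2 = ((τ : ℝ) : ℂ) := by rw [hl1, hl2]; push_cast; ring
    have hprod : l1 * l2 = ((δ : ℝ) : ℂ) := by
      rw [hl1, hl2]
      rw [show ((((τ+r)/2 : ℝ)) : ℂ) * (((τ-r)/2 : ℝ) : ℂ) = (((τ+r)/2 * ((τ-r)/2) : ℝ) : ℂ) by push_cast; ring]
      norm_cast
      linarith [hr2]
    have hn1 : ‖l1‖ ≤ 1 := by
      rw [hl1, Complex.norm_real, Real.norm_eq_abs, abs_le]
      constructor <;> linarith
    have hn2 : ‖l2‖ ≤ 1 := by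
      rw [hl2, Complex.norm_real, Real.norm_eq_abs, abs_le]
      constructor <;> linarith
    apply power_bounded_of_quadratic M l1 l2
    · rw [hsum, hprod]; exact hCH
    · exact hn1
    · exact hn2
    · by_cases hrz : r = 0
      · right
        by_cases hsz : s = 0
        · -- G is a multiple of the identity
          right
          have hrEz : rE = 0 := by rw [hrE, hsz]; ring
          have hrOz : rO = 0 := by rw [hrO, hsz]; ring
          have hfE0 : fE = 0 := by rw [hfE', hrEz]; simp
          have hfO0 : fO = 0 := by rw [hfO', hrOz]; simp
          have hβz : β = 0 := by rw [hβ, hrEz]; ring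
          have hτv : τ = dE^2 + dO^2 := by rw [hτ, hβz]; ring
          have h0 : τ^2 - 4*δ = 0 := by
            rw [hrz] at hr2; simpa using hr2.symm
          rw [hτv, hδ] at h0
          have e2 : (dE^2 - dO^2)^2 = 0 := by linear_combination h0
          have hae : dE^2 = dO^2 := by
            have := pow_eq_zero_iff (n := 2) (by norm_num) |>.mp e2
            linarith
          have hl1v : l1 = ((dE : ℂ))^2 := by
            rw [hl1, hrz]
            rw [show (τ+0)/2 = dE^2 by rw [hτv]; linarith]
            push_cast; ring
          rw [hl1v, hM]
          ext i j
          fin_cases i <;> fin_cases j <;>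
            simp [hfE0, hfO0, Matrix.one_apply] <;> exact_mod_cast hae.symm
        · -- repeated eigenvalue strictly inside unit disk
          left
          have hδlt : δ < 1 := by
            rcases lt_or_eq_of_le hac1 with hlt | heq1
            · rw [hδ]; exact pow_lt_one₀ (le_of_lt (mul_pos ha0 hc0)) hlt (by norm_num)
            · exfalso
              have hdE1 : dE = 1 := by
                refine le_antisymm ha1 ?_
                calc (1:ℝ) = dE * dO := heq1.symm
                  _ ≤ dE * 1 := mul_le_mul_of_nonneg_left hc1 ha0.le
                  _ = dE := mul_one dE
              have hdO1 : dO = 1 := by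
                refine le_antisymm hc1 ?_
                calc (1:ℝ) = dE * dO := heq1.symm
                  _ ≤ 1 * dO := mul_le_mul_of_nonneg_right ha1 hc0.le
                  _ = dO := one_mul dO
              have hcE0 : cE = 0 := by
                have e : Real.exp (-(cE * Δt / 2)) = 1 := by rw [← hdE]; exact hdE1
                rw [Real.exp_eq_one_iff] at e
                have : cE * Δt = 0 := by linarith
                rcases mul_eq_zero.mp this with h' | h'
                · exact h'
                · exact absurd h' (ne_of_gt hΔt)
              have hcO0 : cO = 0 := by
                have e : Real.exp (-(cO * Δt / 2)) = 1 := by rw [← hdO]; exact hdO1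
                rw [Real.exp_eq_one_iff] at e
                have : cO * Δt = 0 := by linarith
                rcases mul_eq_zero.mp this with h' | h'
                · exact h'
                · exact absurd h' (ne_of_gt hΔt)
              have hEE1 : EE = 1 := by rw [hEE, hcE0]; simp [E]
              have hEO1 : EO = 1 := by rw [hEO, hcO0]; simp [E]
              have hβv : β = (Δt/h)^2 * s^2 := by rw [hβeq, hEE1, hEO1]; ring
              have hs0 : 0 < s^2 := by positivity
              have hβpos : 0 < β := by rw [hβv]; positivity
              have hβlt : β < 1 := by
                rw [hβv]
                have h1 : (Δt/h)^2 < 1 := pow_lt_one₀ hdth0.le hdth (by norm_num)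
                exact lt_of_le_of_lt (mul_le_of_le_one_right (sq_nonneg _) hs1) h1
              have hτv : τ = 2 - 4*β := by rw [hτ, hdE1, hdO1]; ring
              have hδv : δ = 1 := by rw [hδ, hdE1, hdO1]; ring
              have : τ^2 - 4*δ = 0 := by rw [← hr2, hrz]; ring
              rw [hτv, hδv] at this
              linarith [mul_pos hβpos (show (0:ℝ) < 1 - β by linarith)]
          have hτsq : τ^2 = 4*δ := by
            have h0 := hr2; rw [hrz] at h0; simp at h0; linarith
          rw [hl1, hrz]
          rw [Complex.norm_real, Real.norm_eq_abs, abs_lt]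
          constructor <;> linarith [sq_nonneg (τ-2), sq_nonneg (τ+2), hτsq, hδlt]
      · left
        rw [hl1, hl2]
        intro heq
        have := Complex.ofReal_inj.mp heq
        have : r = 0 := by linarith
        exact hrz this
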